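/- Let I ≥ 2 and let F be a saturated fraction of the I × I design (a finset F of Fin I × Fin I with card F = 2I − 1 whose model rows are linearly independent over ℝ). Then there exist i ∈ Fin I and j ∈ Fin I such that m_A(i) = 1 and m_B(j) = 1. -/

import Mathlib

open Module


/-- The model row of a design point `(i, j)` under the simple effect model:
a `1` (for the grand mean), the indicators of the first `I - 1` row levels,
and the indicators of the first `J - 1` column levels. -/
def modelRow {I J : ℕ} (p : Fin I × Fin J) :
    ℝ × (Fin (I - 1) → ℝ) × (Fin (J - 1) → ℝ) :=
  (1,
   fun a => if (p.1 : ℕ) = (a : ℕ) then 1 else 0,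
   fun b => if (p.2 : ℕ) = (b : ℕ) then 1 else 0)


lemma indKey {I : ℕ} (i k : Fin I) :
    (if h : (i : ℕ) < I - 1 then (if (k : ℕ) = (i : ℕ) then (1:ℝ) else 0)
     else 1 - ∑ a : Fin (I - 1), if (k : ℕ) = (a : ℕ) then (1:ℝ) else 0)
    = if k = i then 1 else 0 := by
  by_cases h : (i : ℕ) < I - 1
  · simp only [dif_pos h, Fin.ext_iff]
  · have hi : (i : ℕ) = I - 1 := by omega
    rw [dif_neg h]
    by_cases hk : (k : ℕ) < I - 1
    · have h1 : (∑ a : Fin (I - 1), if (k : ℕ) = (a : ℕ) then (1:ℝ) else 0) = 1 := by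
        rw [Finset.sum_eq_single ⟨(k : ℕ), hk⟩]
        · simp
        · intro b _ hb
          rw [if_neg]
          intro hkb
          exact hb (by apply Fin.ext; simp [← hkb])
        · simp
      rw [h1, if_neg (by intro hki; omega)]
      ring
    · have hk' : (k : ℕ) = I - 1 := by omega
      have h1 : (∑ a : Fin (I - 1), if (k : ℕ) = (a : ℕ) then (1:ℝ) else 0) = 0 := by
        apply Finset.sum_eq_zero
        intro a _
        rw [if_neg]
        have := a.isLt; omega
      rw [h1, if_pos (by apply Fin.ext; omega)]
      ring

noncomputable def phiA {I : ℕ} (i : Fin I) :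
    (ℝ × (Fin (I - 1) → ℝ) × (Fin (I - 1) → ℝ)) →ₗ[ℝ] ℝ where
  toFun v := if h : (i : ℕ) < I - 1 then v.2.1 ⟨i, h⟩ else v.1 - ∑ a, v.2.1 a
  map_add' v w := by
    by_cases h : (i : ℕ) < I - 1 <;> simp [h, Finset.sum_add_distrib] <;> ring
  map_smul' c v := by
    by_cases h : (i : ℕ) < I - 1
    · simp [h]
    · simp only [dif_neg h, RingHom.id_apply, Prod.smul_fst, Prod.smul_snd,
        Pi.smul_apply, smul_eq_mul]
      rw [mul_sub, Finset.mul_sum]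

noncomputable def phiB {I : ℕ} (i : Fin I) :
    (ℝ × (Fin (I - 1) → ℝ) × (Fin (I - 1) → ℝ)) →ₗ[ℝ] ℝ where
  toFun v := if h : (i : ℕ) < I - 1 then v.2.2 ⟨i, h⟩ else v.1 - ∑ a, v.2.2 a
  map_add' v w := by
    by_cases h : (i : ℕ) < I - 1 <;> simp [h, Finset.sum_add_distrib] <;> ring
  map_smul' c v := by
    by_cases h : (i : ℕ) < I - 1
    · simp [h]
    · simp only [dif_neg h, RingHom.id_apply, Prod.smul_fst, Prod.smul_snd,
        Pi.smul_apply, smul_eq_mul]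
      rw [mul_sub, Finset.mul_sum]

lemma phiA_modelRow {I : ℕ} (i : Fin I) (p : Fin I × Fin I) :
    phiA i (modelRow p) = if p.1 = i then 1 else 0 := by
  have key := indKey i p.1
  simp only [dite_eq_ite] at key
  simp [phiA, modelRow]
  rw [← key]
  split_ifs <;> simp

lemma phiB_modelRow {I : ℕ} (i : Fin I) (p : Fin I × Fin I) :
    phiB i (modelRow p) = if p.2 = i then 1 else 0 := by
  have key := indKey i p.2
  simp only [dite_eq_ite] at key
  simp [phiB, modelRow]
  rw [← key]
  split_ifs <;> simp

lemma card_le_of_mem_ker {I : ℕ} (hI : 2 ≤ I) (F : Finset (Fin I × Fin I))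
    (hsat : LinearIndependent ℝ (fun p : F => modelRow p.1))
    (φ : (ℝ × (Fin (I - 1) → ℝ) × (Fin (I - 1) → ℝ)) →ₗ[ℝ] ℝ) (hφ : φ ≠ 0)
    (h0 : ∀ p ∈ F, φ (modelRow p) = 0) :
    F.card ≤ 2 * I - 2 := by
  set M := ℝ × (Fin (I - 1) → ℝ) × (Fin (I - 1) → ℝ)
  have hM : finrank ℝ M = 2 * I - 1 := by
    simp [M, Module.finrank_prod, Module.finrank_pi]
    omega
  have hrange : LinearMap.range φ = ⊤ := by
    obtain ⟨m, hm⟩ := DFunLike.ne_iff.1 hφ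
    simp only [LinearMap.zero_apply] at hm
    rw [eq_top_iff]
    intro c _
    exact ⟨(c / φ m) • m, by rw [map_smul, smul_eq_mul]; field_simp⟩
  have hker : finrank ℝ (LinearMap.ker φ) = 2 * I - 2 := by
    have := LinearMap.finrank_range_add_finrank_ker φ
    rw [hrange, hM] at this
    simp at this
    omega
  have hv : LinearIndependent ℝ (fun p : F => (⟨modelRow p.1, h0 p.1 p.2⟩ : LinearMap.ker φ)) := by
    apply LinearIndependent.of_comp (LinearMap.ker φ).subtype
    exact hsat
  have := hv.fintype_card_le_finrank
  rw [Fintype.card_coe, hker] at this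
  exact this

/-- A saturated fraction of the `I × I` design has a row margin equal to `1`
and a column margin equal to `1`. -/
theorem exists_margin_one_of_saturated {I : ℕ} (hI : 2 ≤ I) (F : Finset (Fin I × Fin I))
    (hcard : F.card = 2 * I - 1)
    (hsat : LinearIndependent ℝ (fun p : F => modelRow p.1)) :
    (∃ i : Fin I, (F.filter fun p => p.1 = i).card = 1) ∧
    (∃ j : Fin I, (F.filter fun p => p.2 = j).card = 1) := by
  have hA : ∀ i : Fin I, 1 ≤ (F.filter fun p => p.1 = i).card := by
    intro i
    rw [Nat.one_le_iff_ne_zero, Ne, Finset.card_eq_zero, ← Ne,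
      ← Finset.nonempty_iff_ne_empty]
    by_contra hne
    have h0 : ∀ p ∈ F, phiA i (modelRow p) = 0 := by
      intro p hp
      rw [phiA_modelRow, if_neg]
      intro h
      exact hne ⟨p, Finset.mem_filter.2 ⟨hp, h⟩⟩
    have hφ : phiA i ≠ 0 := by
      intro h
      have := phiA_modelRow i (i, i)
      rw [h] at this
      simp at this
    have := card_le_of_mem_ker hI F hsat (phiA i) hφ h0
    omega
  have hB : ∀ i : Fin I, 1 ≤ (F.filter fun p => p.2 = i).card := by
    intro i
    rw [Nat.one_le_iff_ne_zero, Ne, Finset.card_eq_zero, ← Ne,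
      ← Finset.nonempty_iff_ne_empty]
    by_contra hne
    have h0 : ∀ p ∈ F, phiB i (modelRow p) = 0 := by
      intro p hp
      rw [phiB_modelRow, if_neg]
      intro h
      exact hne ⟨p, Finset.mem_filter.2 ⟨hp, h⟩⟩
    have hφ : phiB i ≠ 0 := by
      intro h
      have := phiB_modelRow i (i, i)
      rw [h] at this
      simp at this
    have := card_le_of_mem_ker hI F hsat (phiB i) hφ h0
    omega
  have hsumA : (∑ i : Fin I, (F.filter fun p => p.1 = i).card) = F.card :=
    (Finset.card_eq_sum_card_fiberwise (fun x _ => Finset.mem_univ x.1)).symm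
  have hsumB : (∑ i : Fin I, (F.filter fun p => p.2 = i).card) = F.card :=
    (Finset.card_eq_sum_card_fiberwise (fun x _ => Finset.mem_univ x.2)).symm
  constructor
  · by_contra hc
    push_neg at hc
    have h2 : ∀ i : Fin I, 2 ≤ (F.filter fun p => p.1 = i).card := by
      intro i; have := hA i; have := hc i; omega
    have : 2 * I ≤ ∑ i : Fin I, (F.filter fun p => p.1 = i).card := by
      calc 2 * I = ∑ _i : Fin I, 2 := by simp [mul_comm]
        _ ≤ _ := Finset.sum_le_sum fun i _ => h2 i
    omega
  · by_contra hc
    push_neg at hc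
    have h2 : ∀ i : Fin I, 2 ≤ (F.filter fun p => p.2 = i).card := by
      intro i; have := hB i; have := hc i; omega
    have : 2 * I ≤ ∑ i : Fin I, (F.filter fun p => p.2 = i).card := by
      calc 2 * I = ∑ _i : Fin I, 2 := by simp [mul_comm]
        _ ≤ _ := Finset.sum_le_sum fun i _ => h2 i
    omega
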